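/- Suppose the first coordinate W_1 of the covariate vector takes only two values a ≠ b. Then for any finite set of support points w_1,…,w_m ∈ ℝ^{p-1} of W (each with first coordinate in {a,b}), the m × p(p+1)/2 matrix S_m with rows v((1, w_i^T)^T) has rank at most p(p+1)/2 − 1, where v is the squares-and-doubled-cross-products transformation on ℝ^p. -/

import Mathlib

lemma aux_rank_lt {m n : Type*} [Fintype m] [Fintype n]
    (M : Matrix m n ℝ) (c : n → ℝ) (hc : c ≠ 0) (h : M.mulVec c = 0) :
    M.rank ≤ Fintype.card n - 1 := by
  have hk : 0 < Module.finrank ℝ (LinearMap.ker M.mulVecLin) := by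
    rw [Module.finrank_pos_iff]
    exact ⟨⟨⟨c, h⟩, 0, by simpa [Subtype.ext_iff] using hc⟩⟩
  have hsum := LinearMap.finrank_range_add_finrank_ker M.mulVecLin
  rw [Module.finrank_pi] at hsum
  have : M.rank + Module.finrank ℝ (LinearMap.ker M.mulVecLin) = Fintype.card n := hsum
  omega

/-- If the first covariate takes only two values, the design matrix of the
second-moment regression cannot have full column rank. Here covariates live in
ℝ^(p+1) (so the full vector x = (1, wᵀ) lives in ℝ^(p+2)). -/
theorem stmt_10 (p m : ℕ) (w : Fin m → (Fin (p + 1) → ℝ)) (a b : ℝ) (hab : a ≠ b)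
    (hw : ∀ i, w i 0 = a ∨ w i 0 = b) :
    (Matrix.of fun (i : Fin m) (q : {q : Fin (p + 2) × Fin (p + 2) // q.1 ≤ q.2}) =>
        if q.1.1 = q.1.2 then (Fin.cons (1 : ℝ) (w i) : Fin (p + 2) → ℝ) q.1.1 ^ 2
        else 2 * (Fin.cons (1 : ℝ) (w i) : Fin (p + 2) → ℝ) q.1.1 *
          (Fin.cons (1 : ℝ) (w i) : Fin (p + 2) → ℝ) q.1.2).rank
      ≤ Fintype.card {q : Fin (p + 2) × Fin (p + 2) // q.1 ≤ q.2} - 1 := by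
  set Q := {q : Fin (p + 2) × Fin (p + 2) // q.1 ≤ q.2}
  set M : Matrix (Fin m) Q ℝ := Matrix.of fun (i : Fin m) (q : Q) =>
        if q.1.1 = q.1.2 then (Fin.cons (1 : ℝ) (w i) : Fin (p + 2) → ℝ) q.1.1 ^ 2
        else 2 * (Fin.cons (1 : ℝ) (w i) : Fin (p + 2) → ℝ) q.1.1 *
          (Fin.cons (1 : ℝ) (w i) : Fin (p + 2) → ℝ) q.1.2 with hM
  have h01 : (0 : Fin (p + 2)) ≤ 1 := by simp [Fin.le_def]
  set q00 : Q := ⟨(0, 0), le_refl _⟩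
  set q11 : Q := ⟨(1, 1), le_refl _⟩
  set q01 : Q := ⟨(0, 1), h01⟩
  set c : Q → ℝ :=
    Pi.single q00 (a * b) + Pi.single q11 (1 : ℝ) + Pi.single q01 (-((a + b) / 2)) with hc
  have hone : (1 : Fin (p + 2)) ≠ 0 := one_ne_zero
  have hne00 : q11 ≠ q00 := fun h => hone (congrArg (fun q : Q => q.1.1) h)
  have hne01 : q11 ≠ q01 := fun h => hone (congrArg (fun q : Q => q.1.1) h)
  have hcne : c ≠ 0 := by
    intro h0
    have := congrFun h0 q11
    simp [hc, Pi.single_apply, hne00, hne01] at this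
  apply aux_rank_lt M c hcne
  have hM00 : ∀ i, M i q00 = 1 := by intro i; simp [hM, q00]
  have hM11 : ∀ i, M i q11 = (w i 0) ^ 2 := by intro i; simp [hM, q11]
  have hM01 : ∀ i, M i q01 = 2 * (w i 0) := by
    intro i
    simp [hM, q01, Fin.ext_iff]
  funext i
  have hmv : M.mulVec c i
      = M i q00 * (a * b) + M i q11 * 1 + M i q01 * (-((a + b) / 2)) := by
    simp [hc, Matrix.mulVec_add, Matrix.mulVec_single, div_eq_mul_inv]
  rw [hmv, hM00 i, hM11 i, hM01 i]
  rcases hw i with h | h <;> rw [h] <;> ring_nf <;> simp
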